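/- Let 0 < α < 1, H > 0 and λ ≥ 1. If u : [a,b] → [0,∞) is continuous and satisfies u(t) ≤ (H/Γ(α)) ∫_a^t (t-s)^{α-1} u(s)^λ ds for every t ∈ [a,b], then u(t) = 0 for every t ∈ [a,b]. Consequently, w(t,s) := H·s^λ is a Kamke function of order α on [a,b]. -/

import Mathlib

open MeasureTheory Set intervalIntegral

/-- `w : [a,b] × [0,∞) → [0,∞)` is a Kamke function of order `α` on `[a,b]`. -/
def IsKamkeFunction (α a b : ℝ) (w : ℝ → ℝ → ℝ) : Prop :=
  ContinuousOn (fun p : ℝ × ℝ => w p.1 p.2) (Set.Icc a b ×ˢ Set.Ici 0) ∧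
  (∀ t ∈ Set.Icc a b, ∀ s : ℝ, 0 ≤ s → 0 ≤ w t s) ∧
  (∀ t ∈ Set.Icc a b, w t 0 = 0) ∧
  (∀ v : ℝ → ℝ, ContinuousOn v (Set.Icc a b) → (∀ t ∈ Set.Icc a b, 0 ≤ v t) →
    (∀ t ∈ Set.Icc a b,
      v t ≤ (Real.Gamma α)⁻¹ * ∫ s in a..t, ((t - s) ^ (α - 1) : ℝ) * w s (v s)) →
    Filter.Tendsto (fun t => v t / (t - a) ^ α) (nhdsWithin a (Set.Ioi a)) (nhds 0) →
    ∀ t ∈ Set.Icc a b, v t = 0)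


lemma kamke_aux_int {α : ℝ} (hα0 : 0 < α) (t p q : ℝ) :
    IntervalIntegrable (fun s => (t - s) ^ (α - 1)) volume p q := by
  have h := (intervalIntegral.intervalIntegrable_rpow'
    (show (-1:ℝ) < α - 1 by linarith) (a := t - p) (b := t - q)).comp_sub_left t
  simpa using h

lemma kamke_aux_val {α : ℝ} (hα0 : 0 < α) (c t : ℝ) :
    (∫ s in c..t, (t - s) ^ (α - 1)) = (t - c) ^ α / α := by
  rw [show (fun s => (t - s) ^ (α - 1)) = fun s => (fun x : ℝ => x ^ (α - 1)) (t - s) from rfl]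
  rw [intervalIntegral.integral_comp_sub_left (fun x : ℝ => x ^ (α - 1)) t]
  rw [sub_self, integral_rpow (Or.inl (by linarith : (-1:ℝ) < α - 1))]
  rw [Real.zero_rpow (by linarith : α - 1 + 1 ≠ 0)]
  rw [show α - 1 + 1 = α by ring, sub_zero]

lemma kamke_step {a b α lam C M δ c : ℝ} {u : ℝ → ℝ}
    (hα0 : 0 < α) (hC : 0 ≤ C) (hlam : 1 ≤ lam)
    (hu : ContinuousOn u (Icc a b)) (hnn : ∀ t ∈ Icc a b, 0 ≤ u t)
    (hineq : ∀ t ∈ Icc a b, u t ≤ C * ∫ s in a..t, (t - s) ^ (α - 1) * u s ^ lam)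
    (hM : ∀ t ∈ Icc a b, u t ≤ M)
    (hδ : 0 < δ) (hsmall : C * M ^ (lam - 1) * (δ ^ α / α) < 1)
    (hc : c ∈ Icc a b) (hzero : ∀ s ∈ Icc a c, u s = 0) :
    ∀ s ∈ Icc a (min b (c + δ)), u s = 0 := by
  set d := min b (c + δ) with hd
  have hcd : c ≤ d := le_min hc.2 (by linarith)
  have hdb : d ≤ b := min_le_left _ _
  have hMnn : 0 ≤ M := le_trans (hnn a ⟨le_rfl, hc.1.trans hc.2⟩) (hM a ⟨le_rfl, hc.1.trans hc.2⟩)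
  -- maximum of u on [c,d]
  obtain ⟨x₁, hx₁, hmax⟩ : ∃ x ∈ Icc c d, ∀ y ∈ Icc c d, u y ≤ u x := by
    obtain ⟨x, hx, hmx⟩ := isCompact_Icc.exists_isMaxOn (nonempty_Icc.2 hcd)
      (hu.mono (Icc_subset_Icc hc.1 hdb))
    exact ⟨x, hx, fun y hy => hmx hy⟩
  set N := u x₁ with hN
  have hsubab : Icc c d ⊆ Icc a b := Icc_subset_Icc hc.1 hdb
  have hNnn : 0 ≤ N := hnn x₁ (hsubab hx₁)
  -- key estimate
  have key : ∀ t ∈ Icc c d, u t ≤ C * M ^ (lam - 1) * (δ ^ α / α) * N := by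
    intro t ht
    have htab : t ∈ Icc a b := hsubab ht
    have hat : a ≤ t := htab.1
    have hct : c ≤ t := ht.1
    have hac : a ≤ c := hc.1
    set g := fun s => (t - s) ^ (α - 1) * u s ^ lam with hg
    -- integrability of g on a..t
    have hker : IntervalIntegrable (fun s => (t - s) ^ (α - 1)) volume a t :=
      kamke_aux_int hα0 t a t
    have humeas : AEStronglyMeasurable (fun s => u s ^ lam)
        (volume.restrict (Set.uIoc a t)) := by
      have h1 : AEStronglyMeasurable u (volume.restrict (Icc a b)) :=
        hu.aestronglyMeasurable measurableSet_Icc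
      have h2 : AEStronglyMeasurable u (volume.restrict (Set.uIoc a t)) := by
        refine h1.mono_measure (Measure.restrict_mono ?_ le_rfl)
        rw [uIoc_of_le hat]
        exact (Ioc_subset_Icc_self).trans (Icc_subset_Icc le_rfl htab.2)
      exact (Real.continuous_rpow_const (by linarith)).comp_aestronglyMeasurable h2
    have hgmeas : AEStronglyMeasurable g (volume.restrict (Set.uIoc a t)) := by
      have := hker.1.aestronglyMeasurable
      rw [uIoc_of_le hat]
      exact this.mul (by rwa [uIoc_of_le hat] at humeas)
    have hint : IntervalIntegrable g volume a t := by
      refine (hker.norm.const_mul (M ^ lam)).mono_fun hgmeas ?_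
      refine (ae_restrict_iff' measurableSet_uIoc).2 (ae_of_all _ fun s hs => ?_)
      rw [uIoc_of_le hat] at hs
      have hsab : s ∈ Icc a b := ⟨hs.1.le, hs.2.trans htab.2⟩
      have h0ts : (0:ℝ) ≤ t - s := by linarith [hs.2]
      have h0k : (0:ℝ) ≤ (t - s) ^ (α - 1) := Real.rpow_nonneg h0ts _
      have h0u : (0:ℝ) ≤ u s ^ lam := Real.rpow_nonneg (hnn s hsab) _
      have hub : u s ^ lam ≤ M ^ lam :=
        Real.rpow_le_rpow (hnn s hsab) (hM s hsab) (by linarith)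
      have hMlamnn : (0:ℝ) ≤ M ^ lam := Real.rpow_nonneg hMnn _
      simp only [hg, Real.norm_eq_abs, abs_of_nonneg h0k, abs_of_nonneg (mul_nonneg h0k h0u),
        abs_of_nonneg (mul_nonneg hMlamnn h0k)]
      calc (t - s) ^ (α - 1) * u s ^ lam ≤ (t - s) ^ (α - 1) * M ^ lam :=
        mul_le_mul_of_nonneg_left hub h0k
      _ = M ^ lam * (t - s) ^ (α - 1) := by ring
    have hint1 : IntervalIntegrable g volume a c :=
      hint.mono_set (by rw [uIcc_of_le hac, uIcc_of_le hat]; exact Icc_subset_Icc le_rfl hct)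
    have hint2 : IntervalIntegrable g volume c t :=
      hint.mono_set (by rw [uIcc_of_le hct, uIcc_of_le hat]; exact Icc_subset_Icc hac le_rfl)
    -- first piece is zero
    have hzero1 : (∫ s in a..c, g s) = 0 := by
      rw [intervalIntegral.integral_congr (g := fun _ => (0:ℝ))
        (fun s hs => ?_), intervalIntegral.integral_zero]
      rw [uIcc_of_le hac] at hs
      have : u s = 0 := hzero s hs
      simp [hg, this, Real.zero_rpow (show lam ≠ 0 by linarith)]
    -- second piece bound
    have hbound2 : (∫ s in c..t, g s) ≤ M ^ (lam - 1) * N * ((t - c) ^ α / α) := by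
      have hmono : (∫ s in c..t, g s) ≤
          ∫ s in c..t, M ^ (lam - 1) * N * (t - s) ^ (α - 1) := by
        refine intervalIntegral.integral_mono_on hct hint2
          ((kamke_aux_int hα0 t c t).const_mul _) (fun s hs => ?_)
        have hsab : s ∈ Icc a b := ⟨hac.trans hs.1, hs.2.trans htab.2⟩
        have hsN : u s ≤ N := hmax s ⟨hs.1, hs.2.trans ht.2⟩
        have h0ts : (0:ℝ) ≤ t - s := by linarith [hs.2]
        have h0k : (0:ℝ) ≤ (t - s) ^ (α - 1) := Real.rpow_nonneg h0ts _
        have hMl' : (0:ℝ) ≤ M ^ (lam - 1) := Real.rpow_nonneg hMnn _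
        have hulam : u s ^ lam ≤ M ^ (lam - 1) * N := by
          rcases eq_or_lt_of_le (hnn s hsab) with h | h
          · rw [← h, Real.zero_rpow (show lam ≠ 0 by linarith)]
            positivity
          · have hsplit : u s ^ lam = u s ^ (lam - 1) * u s := by
              conv_lhs => rw [show lam = lam - 1 + 1 by ring]
              rw [Real.rpow_add h, Real.rpow_one]
            rw [hsplit]
            exact mul_le_mul (Real.rpow_le_rpow h.le (hM s hsab) (by linarith)) hsN h.le hMl' 
        calc (t - s) ^ (α - 1) * u s ^ lam ≤ (t - s) ^ (α - 1) * (M ^ (lam - 1) * N) :=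
          mul_le_mul_of_nonneg_left hulam h0k
        _ = M ^ (lam - 1) * N * (t - s) ^ (α - 1) := by ring
      rwa [intervalIntegral.integral_const_mul, kamke_aux_val hα0 c t] at hmono
    have hut := hineq t htab
    rw [← intervalIntegral.integral_add_adjacent_intervals hint1 hint2, hzero1, zero_add] at hut
    have htcδ : (t - c) ^ α ≤ δ ^ α :=
      Real.rpow_le_rpow (by linarith [ht.1]) (by have := ht.2; have : t ≤ c + δ := le_trans this (min_le_right _ _); linarith) hα0.le
    have hMl : (0:ℝ) ≤ M ^ (lam - 1) := Real.rpow_nonneg hMnn _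
    calc u t ≤ C * (∫ s in c..t, g s) := hut
      _ ≤ C * (M ^ (lam - 1) * N * ((t - c) ^ α / α)) :=
        mul_le_mul_of_nonneg_left hbound2 hC
      _ ≤ C * (M ^ (lam - 1) * N * (δ ^ α / α)) := by
        have hMl : (0:ℝ) ≤ M ^ (lam - 1) := Real.rpow_nonneg hMnn _
        gcongr
      _ = C * M ^ (lam - 1) * (δ ^ α / α) * N := by ring
  -- conclude N = 0
  have hN0 : N ≤ 0 := by
    have := key x₁ hx₁
    nlinarith
  intro s hs
  rcases le_total s c with h | h
  · exact hzero s ⟨hs.1, h⟩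
  · have hsN : u s ≤ N := hmax s ⟨h, hs.2⟩
    have := hnn s (hsubab ⟨h, hs.2⟩)
    linarith
lemma kamke_core {a b α lam C : ℝ} {u : ℝ → ℝ}
    (hab : a ≤ b) (hα0 : 0 < α) (hα1 : α < 1) (hC : 0 ≤ C) (hlam : 1 ≤ lam)
    (hu : ContinuousOn u (Icc a b)) (hnn : ∀ t ∈ Icc a b, 0 ≤ u t)
    (hineq : ∀ t ∈ Icc a b, u t ≤ C * ∫ s in a..t, (t - s) ^ (α - 1) * u s ^ lam) :
    ∀ t ∈ Icc a b, u t = 0 := by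
  -- global bound
  obtain ⟨x₀, hx₀, hmx⟩ := isCompact_Icc.exists_isMaxOn (nonempty_Icc.2 hab) hu
  set M := u x₀ with hM
  have hMb : ∀ t ∈ Icc a b, u t ≤ M := fun t ht => hmx ht
  have hMnn : 0 ≤ M := hnn x₀ hx₀
  set K := C * M ^ (lam - 1) with hK
  have hKnn : 0 ≤ K := mul_nonneg hC (Real.rpow_nonneg hMnn _)
  -- choice of δ
  set r := (α / (2 * (K + 1))) ^ α⁻¹ with hr
  have hrpos : 0 < r := Real.rpow_pos_of_pos (by positivity) _
  set δ := min 1 r with hδdef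
  have hδ : 0 < δ := lt_min one_pos hrpos
  have hsmall : K * (δ ^ α / α) < 1 := by
    have h1 : δ ^ α ≤ r ^ α := Real.rpow_le_rpow hδ.le (min_le_right _ _) hα0.le
    have h2 : r ^ α = α / (2 * (K + 1)) := Real.rpow_inv_rpow (by positivity) hα0.ne'
    have h3 : δ ^ α / α ≤ 1 / (2 * (K + 1)) := by
      rw [div_le_div_iff₀ hα0 (by positivity)]
      rw [h2] at h1
      calc δ ^ α * (2 * (K + 1)) ≤ (α / (2 * (K + 1))) * (2 * (K + 1)) := by
            apply mul_le_mul_of_nonneg_right h1 (by positivity)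
        _ = 1 * α := by field_simp
    have h4 : K * (δ ^ α / α) ≤ K * (1 / (2 * (K + 1))) :=
      mul_le_mul_of_nonneg_left h3 hKnn
    have h5 : K * (1 / (2 * (K + 1))) < 1 := by
      rw [mul_one_div, div_lt_one (by positivity)]; linarith
    linarith
  have hua : u a = 0 := by
    have h := hineq a ⟨le_rfl, hab⟩
    rw [intervalIntegral.integral_same, mul_zero] at h
    exact le_antisymm h (hnn a ⟨le_rfl, hab⟩)
  have main : ∀ n : ℕ, ∀ s ∈ Icc a b, s ≤ a + n * δ → u s = 0 := by
    intro n
    induction n with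
    | zero =>
      intro s hs hsle
      have : s = a := le_antisymm (by simpa using hsle) hs.1
      rw [this, hua]
    | succ n ih =>
      set c := min (a + n * δ) b with hcdef
      have hc : c ∈ Icc a b := ⟨le_min (by nlinarith [hδ.le, Nat.cast_nonneg (α := ℝ) n]) hab, min_le_right _ _⟩
      have hz : ∀ s ∈ Icc a c, u s = 0 := fun s hs =>
        ih s ⟨hs.1, hs.2.trans (min_le_right _ _)⟩ (hs.2.trans (min_le_left _ _))
      have hstep := kamke_step hα0 hC hlam hu hnn hineq hMb hδ (by rw [← hK]; exact hsmall)
        hc hz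
      intro s hs hsle
      refine hstep s ⟨hs.1, le_min hs.2 ?_⟩
      rcases le_total (a + n * δ) b with h | h
      · rw [hcdef, min_eq_left h]; push_cast at hsle; linarith
      · rw [hcdef, min_eq_right h]; linarith [hs.2, hδ.le]
  intro t ht
  obtain ⟨n, hn⟩ := exists_nat_ge ((b - a) / δ)
  refine main n t ht ?_
  rw [div_le_iff₀ hδ] at hn
  linarith [ht.2]

theorem superlinear_is_kamke
    (a b α H lam : ℝ) (hab : a < b) (hα0 : 0 < α) (hα1 : α < 1) (hH : 0 < H)
    (hlam : 1 ≤ lam) :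
    (∀ u : ℝ → ℝ, ContinuousOn u (Set.Icc a b) → (∀ t ∈ Set.Icc a b, 0 ≤ u t) →
      (∀ t ∈ Set.Icc a b,
        u t ≤ H / Real.Gamma α * ∫ s in a..t, ((t - s) ^ (α - 1) : ℝ) * u s ^ lam) →
      ∀ t ∈ Set.Icc a b, u t = 0) ∧
    IsKamkeFunction α a b (fun _ s => H * s ^ lam) := by
  have hΓ : 0 < Real.Gamma α := Real.Gamma_pos_of_pos hα0
  have hC : 0 ≤ H / Real.Gamma α := by positivity
  constructor
  · intro u hu hnn hineq
    exact kamke_core hab.le hα0 hα1 hC hlam hu hnn hineq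
  · refine ⟨?_, ?_, ?_, ?_⟩
    · exact (continuous_const.mul
        ((Real.continuous_rpow_const (by linarith)).comp continuous_snd)).continuousOn
    · intro t _ s hs
      exact mul_nonneg hH.le (Real.rpow_nonneg hs _)
    · intro t _
      simp [Real.zero_rpow (show lam ≠ 0 by linarith)]
    · intro v hv hvnn hvineq _
      apply kamke_core hab.le hα0 hα1 hC hlam hv hvnn
      intro t ht
      have h := hvineq t ht
      have heq : (fun s => ((t - s) ^ (α - 1) : ℝ) * (H * v s ^ lam))
          = fun s => H * (((t - s) ^ (α - 1) : ℝ) * v s ^ lam) := by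
        funext s; ring
      rw [heq, intervalIntegral.integral_const_mul] at h
      calc v t ≤ (Real.Gamma α)⁻¹ * (H * ∫ s in a..t, ((t - s) ^ (α - 1) : ℝ) * v s ^ lam) := h
        _ = H / Real.Gamma α * ∫ s in a..t, ((t - s) ^ (α - 1) : ℝ) * v s ^ lam := by
          rw [div_eq_mul_inv]; ring
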